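/- Let G act on a set Ω as above with a proper interactive pair. If g ∈ G₁ *_A G₂ is written in normal form g = gₙhₙ⋯g₁h₁ with gᵢ ∈ G₁ \ A and hᵢ ∈ G₂ \ A, and x ∈ X₁ is a point not contained in (G₁ \ A)·X₂, then g(x) ∈ (G₁ \ A)·X₂; in particular g(x) ≠ x. -/

import Mathlib

/-- In the ping-pong setting for an amalgamated product acting on `Ω` (proper
interactive pair): if `g = gₙhₙ⋯g₁h₁` in normal form, with `gᵢ ∈ G₁ \ A` and
`hᵢ ∈ G₂ \ A`, and `x ∈ X₁` is not contained in `(G₁ \ A)·X₂`, then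
`g(x) ∈ (G₁ \ A)·X₂`; in particular `g(x) ≠ x`. -/
theorem pingPong_normal_form_moves {G Ω : Type*} [Group G] [MulAction G Ω]
    (G₁ G₂ A : Subgroup G) (hA1 : A ≤ G₁) (hA2 : A ≤ G₂)
    (X₁ X₂ X₁e X₂e : Set Ω)
    (hdisj : Disjoint X₁ X₂) (h1e : X₁e ⊆ X₁) (h2e : X₂e ⊆ X₂)
    (hA1e : ∀ a ∈ A, ∀ x ∈ X₁e, a • x ∈ X₁e)
    (hA2e : ∀ a ∈ A, ∀ x ∈ X₂e, a • x ∈ X₂e)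
    (h12 : ∀ g ∈ G₁, g ∉ A → ∀ x ∈ X₂, g • x ∈ X₁e)
    (h21 : ∀ g ∈ G₂, g ∉ A → ∀ x ∈ X₁, g • x ∈ X₂e)
    (l : List (G × G)) (hl : l ≠ [])
    (hmem : ∀ p ∈ l, p.1 ∈ G₁ ∧ p.1 ∉ A ∧ p.2 ∈ G₂ ∧ p.2 ∉ A)
    (x : Ω) (hx : x ∈ X₁)
    (hxnot : ∀ g ∈ G₁, g ∉ A → ∀ z ∈ X₂, g • z ≠ x) :
    (∃ g ∈ G₁, g ∉ A ∧ ∃ z ∈ X₂, (l.map fun p => p.1 * p.2).prod • x = g • z) ∧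
      (l.map fun p => p.1 * p.2).prod • x ≠ x := by
  have key : ∃ g ∈ G₁, g ∉ A ∧ ∃ z ∈ X₂,
      (l.map fun p => p.1 * p.2).prod • x = g • z := by
    clear hxnot
    induction l with
    | nil => exact absurd rfl hl
    | cons p t ih =>
      obtain ⟨hp1, hp1A, hp2, hp2A⟩ := hmem p List.mem_cons_self
      have hmem' : ∀ q ∈ t, q.1 ∈ G₁ ∧ q.1 ∉ A ∧ q.2 ∈ G₂ ∧ q.2 ∉ A :=
        fun q hq => hmem q (List.mem_cons_of_mem p hq)
      rcases eq_or_ne t [] with ht | ht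
      · subst ht
        refine ⟨p.1, hp1, hp1A, p.2 • x, h2e (h21 p.2 hp2 hp2A x hx), ?_⟩
        simp [mul_smul]
      · obtain ⟨g, hg1, hgA, z, hz, hgz⟩ := ih ht hmem'
        have h1 : g • z ∈ X₁ := h1e (h12 g hg1 hgA z hz)
        refine ⟨p.1, hp1, hp1A, p.2 • (g • z),
          h2e (h21 p.2 hp2 hp2A _ h1), ?_⟩
        simp only [List.map_cons, List.prod_cons, mul_smul, hgz]
  obtain ⟨g, hg1, hgA, z, hz, hgz⟩ := key
  exact ⟨⟨g, hg1, hgA, z, hz, hgz⟩, by rw [hgz]; exact hxnot g hg1 hgA z hz⟩
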